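/- There is an absolute constant C such that for every natural number A, ∑_{B=0}^{A} binom(A,B)/binom(2A,2B) ≤ C. -/

import Mathlib

namespace WKE

/-- `2^n ≤ centralBinom n`. -/
lemma two_pow_le_centralBinom (n : ℕ) : 2 ^ n ≤ Nat.centralBinom n := by
  induction n with
  | zero => simp [Nat.centralBinom]
  | succ n ih =>
      have key := Nat.succ_mul_centralBinom_succ n
      have h1 : (n + 1) * 2 ^ (n + 1) ≤ (n + 1) * Nat.centralBinom (n + 1) := by
        rw [key]
        calc (n + 1) * 2 ^ (n + 1) = 2 * (n + 1) * 2 ^ n := by ring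
          _ ≤ 2 * (2 * n + 1) * Nat.centralBinom n := by
              apply Nat.mul_le_mul
              · omega
              · exact ih
      exact Nat.le_of_mul_le_mul_left h1 (Nat.succ_pos n)

/-- `2^min(B, A-B) ≤ binom(A,B)` for `B ≤ A`. -/
lemma two_pow_min_le_choose {A B : ℕ} (h : B ≤ A) :
    2 ^ min B (A - B) ≤ A.choose B := by
  rcases le_total B (A - B) with hb | hb
  · rw [min_eq_left hb]
    calc 2 ^ B ≤ Nat.centralBinom B := two_pow_le_centralBinom B
      _ = (2 * B).choose B := rfl
      _ ≤ A.choose B := Nat.choose_le_choose B (by omega)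
  · rw [min_eq_right hb, ← Nat.choose_symm h]
    calc 2 ^ (A - B) ≤ Nat.centralBinom (A - B) := two_pow_le_centralBinom (A - B)
      _ = (2 * (A - B)).choose (A - B) := rfl
      _ ≤ A.choose (A - B) := Nat.choose_le_choose (A - B) (by omega)

/-- Vandermonde single-term bound: `binom(A,B)^2 ≤ binom(2A, 2B)`. -/
lemma choose_sq_le (A B : ℕ) : A.choose B * A.choose B ≤ (2 * A).choose (2 * B) := by
  have := Nat.add_choose_eq A A (2 * B)
  rw [two_mul A, this]
  have hmem : (B, B) ∈ Finset.HasAntidiagonal.antidiagonal (2 * B) := by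
    simp [two_mul]
  exact Finset.single_le_sum (f := fun p => A.choose p.1 * A.choose p.2)
    (fun i _ => Nat.zero_le _) hmem

theorem binomial_ratio_sum_bounded :
    ∃ C : ℝ, ∀ A : ℕ,
      ∑ B ∈ Finset.range (A + 1), ((A.choose B : ℝ) / ((2 * A).choose (2 * B) : ℝ)) ≤ C := by
  refine ⟨4, fun A => ?_⟩
  have hterm : ∀ B ∈ Finset.range (A + 1),
      ((A.choose B : ℝ) / ((2 * A).choose (2 * B) : ℝ)) ≤ (1/2 : ℝ) ^ B + (1/2 : ℝ) ^ (A - B) := by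
    intro B hB
    rw [Finset.mem_range] at hB
    have hBA : B ≤ A := by omega
    have hpos : (0 : ℝ) < A.choose B := by
      exact_mod_cast Nat.choose_pos hBA
    have hpos2 : (0 : ℝ) < (2 * A).choose (2 * B) := by
      exact_mod_cast Nat.choose_pos (by omega : 2 * B ≤ 2 * A)
    have h1 : ((A.choose B : ℝ) / ((2 * A).choose (2 * B) : ℝ)) ≤ 1 / (A.choose B : ℝ) := by
      rw [div_le_div_iff₀ hpos2 hpos, one_mul]
      exact_mod_cast choose_sq_le A B
    have h2 : (1 : ℝ) / (A.choose B : ℝ) ≤ (1/2 : ℝ) ^ min B (A - B) := by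
      rw [div_le_iff₀ hpos]
      have : (2 : ℝ) ^ min B (A - B) ≤ (A.choose B : ℝ) := by
        exact_mod_cast two_pow_min_le_choose hBA
      calc (1 : ℝ) = (1/2 : ℝ) ^ min B (A-B) * 2 ^ min B (A-B) := by
            rw [one_div, inv_pow, inv_mul_cancel₀ (by positivity)]
        _ ≤ (1/2 : ℝ) ^ min B (A-B) * (A.choose B : ℝ) := by
            apply mul_le_mul_of_nonneg_left this (by positivity)
    have h3 : ((1:ℝ)/2) ^ min B (A - B) ≤ (1/2 : ℝ) ^ B + (1/2 : ℝ) ^ (A - B) := by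
      rcases min_choice B (A - B) with h | h <;> rw [h] <;>
        [skip; skip] <;> nlinarith [pow_nonneg (by norm_num : (0:ℝ) ≤ 1/2) B,
          pow_nonneg (by norm_num : (0:ℝ) ≤ 1/2) (A - B)]
    linarith
  have hsum := Finset.sum_le_sum hterm
  refine le_trans hsum ?_
  rw [Finset.sum_add_distrib]
  have hgeo : ∑ B ∈ Finset.range (A + 1), (1/2 : ℝ) ^ B ≤ 2 := by
    have := geom_sum_Ico_le_of_lt_one (x := (1/2 : ℝ)) (by norm_num) (by norm_num)
      (m := 0) (n := A + 1)
    rw [Finset.range_eq_Ico]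
    calc ∑ B ∈ Finset.Ico 0 (A + 1), (1/2 : ℝ) ^ B ≤ (1/2 : ℝ) ^ 0 / (1 - 1/2) := this
      _ = 2 := by norm_num
  have hrefl : ∑ B ∈ Finset.range (A + 1), (1/2 : ℝ) ^ (A - B)
      = ∑ B ∈ Finset.range (A + 1), (1/2 : ℝ) ^ B := by
    rw [← Finset.sum_range_reflect]
    apply Finset.sum_congr rfl
    intro i hi
    rw [Finset.mem_range] at hi
    congr 1
    omega
  rw [hrefl]
  linarith

end WKE
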